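/- lim_{γ→∞} φ(γ) = 2, where φ(γ) = 2^{(1-γ)/2}·(γ/2)·∫_0^∞ (s+1)^{-(γ+2)/2}(s+2)^{(γ-1)/2} ds. -/

import Mathlib

open Real MeasureTheory Filter Set Topology


private lemma hasDerivAt_F (p : ℝ) (hp : p ≠ 0) {s : ℝ} (hs : 0 ≤ s) :
    HasDerivAt (fun x : ℝ => -(1/p) * ((x+2)/(x+1))^p)
      ((s+1)^(-p-1) * (s+2)^(p-1)) s := by
  have h1 : (0:ℝ) < s + 1 := by linarith
  have h2 : (0:ℝ) < s + 2 := by linarith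
  have hu : HasDerivAt (fun x : ℝ => (x+2)/(x+1)) (-((s+1)^2)⁻¹) s := by
    have ha : HasDerivAt (fun x : ℝ => x + 2) 1 s := (hasDerivAt_id s).add_const 2
    have hb : HasDerivAt (fun x : ℝ => x + 1) 1 s := (hasDerivAt_id s).add_const 1
    have := ha.div hb (ne_of_gt h1)
    refine this.congr_deriv ?_
    field_simp
    ring
  have hpos : (0:ℝ) < (s+2)/(s+1) := div_pos h2 h1
  have hr := (hu.rpow_const (p := p) (Or.inl (ne_of_gt hpos))).const_mul (-(1/p))
  refine hr.congr_deriv ?_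
  rw [Real.div_rpow h2.le h1.le]
  have e1 : (s+1:ℝ)^(-p-1) = ((s+1)^(p-1))⁻¹ * ((s+1)^2)⁻¹ := by
    rw [← Real.rpow_neg h1.le, ← Real.rpow_natCast (s+1) 2, ← Real.rpow_neg h1.le,
      ← Real.rpow_add h1]
    congr 1
    push_cast
    ring
  rw [e1]
  have hA : ((s+1:ℝ)^(p-1)) ≠ 0 := ne_of_gt (Real.rpow_pos_of_pos h1 _)
  have hB : ((s+1:ℝ)^2) ≠ 0 := by positivity
  have e2 : -(1/p) * (-(((s+1:ℝ))^2)⁻¹ * p * ((s+2)^(p-1) / (s+1)^(p-1)))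
      = (1/p*p) * (((s+1:ℝ)^2)⁻¹ * ((s+2)^(p-1) * ((s+1)^(p-1))⁻¹)) := by
    rw [div_eq_mul_inv]; ring
  rw [e2, one_div_mul_cancel hp, one_mul]
  ring

private lemma integral_h (p : ℝ) (hp : 0 < p) :
    IntegrableOn (fun s : ℝ => (s+1)^(-p-1) * (s+2)^(p-1)) (Ioi (0:ℝ)) ∧
      ∫ s in Ioi (0:ℝ), (s+1)^(-p-1) * (s+2)^(p-1) = ((2:ℝ)^p - 1)/p := by
  have hderiv : ∀ x ∈ Ici (0:ℝ), HasDerivAt (fun x : ℝ => -(1/p) * ((x+2)/(x+1))^p)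
      ((x+1)^(-p-1) * (x+2)^(p-1)) x := fun x hx => hasDerivAt_F p (ne_of_gt hp) hx
  have hnonneg : ∀ x ∈ Ioi (0:ℝ), 0 ≤ (x+1)^(-p-1) * (x+2)^(p-1) := by
    intro x hx
    have h1 : (0:ℝ) < x + 1 := by linarith [hx.out]
    have h2 : (0:ℝ) < x + 2 := by linarith [hx.out]
    positivity
  have hu : Tendsto (fun x : ℝ => (x+2)/(x+1)) atTop (𝓝 1) := by
    have heq : (fun x : ℝ => (x+2)/(x+1)) =ᶠ[atTop] fun x => 1 + (x+1)⁻¹ := by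
      filter_upwards [eventually_gt_atTop (0:ℝ)] with x hx
      have : (0:ℝ) < x + 1 := by linarith
      field_simp
      ring
    rw [tendsto_congr' heq]
    have : Tendsto (fun x : ℝ => (x+1)⁻¹) atTop (𝓝 0) :=
      tendsto_inv_atTop_zero.comp (tendsto_atTop_add_const_right _ 1 tendsto_id)
    simpa using tendsto_const_nhds.add this
  have hF : Tendsto (fun x : ℝ => -(1/p) * ((x+2)/(x+1))^p) atTop (𝓝 (-(1/p))) := by
    have h1 : Tendsto (fun x : ℝ => ((x+2)/(x+1))^p) atTop (𝓝 1) := by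
      have := ((Real.continuousAt_rpow_const 1 p (Or.inl one_ne_zero)).tendsto).comp hu
      simpa [Function.comp_def] using this
    have := h1.const_mul (-(1/p))
    simpa using this
  have hint : IntegrableOn (fun s : ℝ => (s+1)^(-p-1) * (s+2)^(p-1)) (Ioi (0:ℝ)) :=
    integrableOn_Ioi_deriv_of_nonneg' hderiv hnonneg hF
  refine ⟨hint, ?_⟩
  have := integral_Ioi_of_hasDerivAt_of_nonneg' hderiv hnonneg hF
  rw [this]
  have hp' : p ≠ 0 := ne_of_gt hp
  norm_num
  field_simp
  ring

private lemma tail_int (T : ℝ) (hT : 0 ≤ T) :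
    IntegrableOn (fun s : ℝ => (s+1)^(-(3:ℝ)/2)) (Ioi T) ∧
      ∫ s in Ioi T, (s+1)^(-(3:ℝ)/2) ≤ 2 := by
  have hderiv : ∀ x ∈ Ici T, HasDerivAt (fun x : ℝ => -2 * (x+1)^(-(1:ℝ)/2))
      ((x+1)^(-(3:ℝ)/2)) x := by
    intro x hx
    have h1 : (0:ℝ) < x + 1 := by have := hx.out; linarith
    have hb : HasDerivAt (fun x : ℝ => x + 1) 1 x := (hasDerivAt_id x).add_const 1
    have := (hb.rpow_const (p := -(1:ℝ)/2) (Or.inl (ne_of_gt h1))).const_mul (-2 : ℝ)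
    refine this.congr_deriv ?_
    rw [show (-(1:ℝ)/2 - 1) = -(3:ℝ)/2 by norm_num]
    ring
  have hnonneg : ∀ x ∈ Ioi T, (0:ℝ) ≤ (x+1)^(-(3:ℝ)/2) := by
    intro x hx
    have h1 : (0:ℝ) < x + 1 := by have := hx.out; linarith
    positivity
  have hF : Tendsto (fun x : ℝ => -2 * (x+1)^(-(1:ℝ)/2)) atTop (𝓝 0) := by
    have h1 : Tendsto (fun x : ℝ => (x+1)^(-(1:ℝ)/2)) atTop (𝓝 0) := by
      have := (tendsto_rpow_neg_atTop (by norm_num : (0:ℝ) < 1/2)).comp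
        (tendsto_atTop_add_const_right atTop 1 tendsto_id)
      simpa [Function.comp_def, neg_div] using this
    have := h1.const_mul (-2 : ℝ)
    simpa using this
  have hint := integrableOn_Ioi_deriv_of_nonneg' hderiv hnonneg hF
  refine ⟨hint, ?_⟩
  rw [integral_Ioi_of_hasDerivAt_of_nonneg' hderiv hnonneg hF]
  have h1 : (0:ℝ) < T + 1 := by linarith
  have h2 : (T+1:ℝ)^(-(1:ℝ)/2) ≤ 1 :=
    Real.rpow_le_one_of_one_le_of_nonpos (by linarith) (by norm_num)
  nlinarith [Real.rpow_pos_of_pos h1 (-(1:ℝ)/2)]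

private lemma f_eq (γ s : ℝ) (hs : 0 ≤ s) :
    (s+1)^(-(γ+2)/2) * (s+2)^((γ-1)/2)
      = ((s+2)/(s+1))^(γ/2) * ((s+1)⁻¹ * (s+2)^(-(1:ℝ)/2)) := by
  have h1 : (0:ℝ) < s + 1 := by linarith
  have h2 : (0:ℝ) < s + 2 := by linarith
  rw [Real.div_rpow h2.le h1.le,
    show (-(γ+2)/2) = -(γ/2) + (-1) by ring,
    show ((γ-1)/2) = γ/2 + (-(1:ℝ)/2) by ring,
    Real.rpow_add h1, Real.rpow_add h2, Real.rpow_neg h1.le, Real.rpow_neg_one]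
  ring

private lemma f_eq2 (γ s : ℝ) (hs : 0 ≤ s) :
    (s+1)^(-(γ+2)/2) * (s+2)^((γ-1)/2)
      = (s+2)^((1:ℝ)/2) * ((s+1)^(-(γ/2)-1) * (s+2)^(γ/2-1)) := by
  have h1 : (0:ℝ) < s + 1 := by linarith
  have h2 : (0:ℝ) < s + 2 := by linarith
  rw [show ((γ-1)/2) = (1:ℝ)/2 + (γ/2 - 1) by ring, Real.rpow_add h2,
    show (-(γ+2)/2) = -(γ/2) - 1 by ring]
  ring

private lemma f_nonneg (γ s : ℝ) (hs : 0 ≤ s) :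
    0 ≤ (s+1)^(-(γ+2)/2) * (s+2)^((γ-1)/2) := by
  have h1 : (0:ℝ) < s + 1 := by linarith
  have h2 : (0:ℝ) < s + 2 := by linarith
  positivity

private lemma f_le (γ T s : ℝ) (hγ : 0 ≤ γ) (hT : 0 ≤ T) (hs : T ≤ s) :
    (s+1)^(-(γ+2)/2) * (s+2)^((γ-1)/2)
      ≤ ((T+2)/(T+1))^(γ/2) * (s+1)^(-(3:ℝ)/2) := by
  have hs0 : (0:ℝ) ≤ s := hT.trans hs
  have h1 : (0:ℝ) < s + 1 := by linarith
  have h2 : (0:ℝ) < s + 2 := by linarith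
  have hT1 : (0:ℝ) < T + 1 := by linarith
  rw [f_eq γ s hs0]
  have hb1 : ((s+2)/(s+1) : ℝ)^(γ/2) ≤ ((T+2)/(T+1))^(γ/2) := by
    apply Real.rpow_le_rpow (le_of_lt (div_pos h2 h1)) _ (by linarith)
    rw [div_le_div_iff₀ h1 hT1]
    nlinarith
  have hb2 : ((s+1:ℝ)⁻¹ * (s+2)^(-(1:ℝ)/2)) ≤ (s+1)^(-(3:ℝ)/2) := by
    have e : ((s+1:ℝ))⁻¹ * (s+1)^(-(1:ℝ)/2) = (s+1)^(-(3:ℝ)/2) := by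
      rw [← Real.rpow_neg_one (s+1), ← Real.rpow_add h1]
      norm_num
    calc (s+1:ℝ)⁻¹ * (s+2)^(-(1:ℝ)/2)
        ≤ (s+1:ℝ)⁻¹ * (s+1)^(-(1:ℝ)/2) := by
          apply mul_le_mul_of_nonneg_left _ (by positivity)
          exact Real.rpow_le_rpow_of_nonpos h1 (by linarith) (by norm_num)
      _ = (s+1)^(-(3:ℝ)/2) := e
  apply mul_le_mul hb1 hb2 (by positivity) (by positivity)

private lemma f_contOn (γ : ℝ) :
    ContinuousOn (fun s : ℝ => (s+1)^(-(γ+2)/2) * (s+2)^((γ-1)/2)) (Ioi (0:ℝ)) := by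
  intro s hs
  have h1 : (0:ℝ) < s+1 := by have := hs.out; linarith
  have h2 : (0:ℝ) < s+2 := by have := hs.out; linarith
  have cadd1 : ContinuousAt (fun x : ℝ => x + 1) s := by fun_prop
  have cadd2 : ContinuousAt (fun x : ℝ => x + 2) s := by fun_prop
  have c1 : ContinuousAt (fun x : ℝ => (x+1)^(-(γ+2)/2)) s :=
    ContinuousAt.comp (x := s) (f := fun x : ℝ => x + 1)
      (Real.continuousAt_rpow_const (s+1) (-(γ+2)/2) (Or.inl (ne_of_gt h1))) cadd1
  have c2 : ContinuousAt (fun x : ℝ => (x+2)^((γ-1)/2)) s :=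
    ContinuousAt.comp (x := s) (f := fun x : ℝ => x + 2)
      (Real.continuousAt_rpow_const (s+2) ((γ-1)/2) (Or.inl (ne_of_gt h2))) cadd2
  exact (c1.mul c2).continuousWithinAt

private lemma f_integrableOn (γ : ℝ) (hγ : 0 ≤ γ) :
    IntegrableOn (fun s : ℝ => (s+1)^(-(γ+2)/2) * (s+2)^((γ-1)/2)) (Ioi (0:ℝ)) := by
  apply Integrable.mono' (((tail_int 0 le_rfl).1).const_mul (((0+2)/(0+1) : ℝ)^(γ/2)))
  · exact (f_contOn γ).aestronglyMeasurable measurableSet_Ioi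
  · filter_upwards [self_mem_ae_restrict measurableSet_Ioi] with s hs
    have hs0 : (0:ℝ) ≤ s := le_of_lt hs.out
    rw [Real.norm_eq_abs, abs_of_nonneg (f_nonneg γ s hs0)]
    exact f_le γ 0 s hγ le_rfl hs0

private lemma phi_lower (γ : ℝ) (hγ : 1 ≤ γ) :
    (2:ℝ)^((1-γ)/2) * ((2:ℝ)^((1:ℝ)/2) * ((2:ℝ)^(γ/2) - 1))
      ≤ (2:ℝ)^((1-γ)/2) * (γ/2) *
        ∫ s in Ioi (0:ℝ), (s+1)^(-(γ+2)/2) * (s+2)^((γ-1)/2) := by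
  have hp : (0:ℝ) < γ/2 := by linarith
  obtain ⟨hInt_h, hVal_h⟩ := integral_h (γ/2) hp
  have hf_int := f_integrableOn γ (by linarith)
  have hlow : (2:ℝ)^((1:ℝ)/2) * (((2:ℝ)^(γ/2) - 1)/(γ/2))
      ≤ ∫ s in Ioi (0:ℝ), (s+1)^(-(γ+2)/2) * (s+2)^((γ-1)/2) := by
    have hmono : ∫ s in Ioi (0:ℝ), (2:ℝ)^((1:ℝ)/2) * ((s+1)^(-(γ/2)-1) * (s+2)^(γ/2-1))
        ≤ ∫ s in Ioi (0:ℝ), (s+1)^(-(γ+2)/2) * (s+2)^((γ-1)/2) := by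
      apply setIntegral_mono_on (hInt_h.const_mul _) hf_int measurableSet_Ioi
      intro s hs
      have hs0 : (0:ℝ) ≤ s := le_of_lt hs.out
      have h1 : (0:ℝ) < s + 1 := by linarith
      have h2 : (0:ℝ) < s + 2 := by linarith
      rw [f_eq2 γ s hs0]
      apply mul_le_mul_of_nonneg_right _ (by positivity)
      exact Real.rpow_le_rpow (by norm_num) (by linarith) (by norm_num)
    rwa [MeasureTheory.integral_const_mul, hVal_h] at hmono
  calc (2:ℝ)^((1-γ)/2) * ((2:ℝ)^((1:ℝ)/2) * ((2:ℝ)^(γ/2) - 1))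
      = ((2:ℝ)^((1-γ)/2) * (γ/2)) * ((2:ℝ)^((1:ℝ)/2) * (((2:ℝ)^(γ/2) - 1)/(γ/2))) := by
        field_simp
    _ ≤ _ := mul_le_mul_of_nonneg_left hlow
          (by positivity : (0:ℝ) ≤ (2:ℝ)^((1-γ)/2) * (γ/2))

private lemma phi_upper (γ : ℝ) (hγ : 1 ≤ γ) (T : ℝ) (hT : 0 < T) :
    (2:ℝ)^((1-γ)/2) * (γ/2) *
        ∫ s in Ioi (0:ℝ), (s+1)^(-(γ+2)/2) * (s+2)^((γ-1)/2)
      ≤ (T+2)^((1:ℝ)/2) * ((2:ℝ)^((1-γ)/2) * (2:ℝ)^(γ/2))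
          + γ * (2:ℝ)^((1-γ)/2) * (((T+2)/(T+1)))^(γ/2) := by
  have hp : (0:ℝ) < γ/2 := by linarith
  obtain ⟨hInt_h, hVal_h⟩ := integral_h (γ/2) hp
  have hf_int := f_integrableOn γ (by linarith)
  have hT1 : (0:ℝ) < T + 1 := by linarith
  have hT2 : (0:ℝ) < T + 2 := by linarith
  -- split the integral
  have hsplit : ∫ s in Ioi (0:ℝ), (s+1)^(-(γ+2)/2) * (s+2)^((γ-1)/2)
      = (∫ s in Ioc (0:ℝ) T, (s+1)^(-(γ+2)/2) * (s+2)^((γ-1)/2))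
        + ∫ s in Ioi T, (s+1)^(-(γ+2)/2) * (s+2)^((γ-1)/2) := by
    rw [← Set.Ioc_union_Ioi_eq_Ioi hT.le]
    exact setIntegral_union (Set.Ioc_disjoint_Ioi le_rfl) measurableSet_Ioi
      (hf_int.mono_set Set.Ioc_subset_Ioi_self)
      (hf_int.mono_set (Set.Ioi_subset_Ioi hT.le))
  -- bound the first part
  have hpart1 : ∫ s in Ioc (0:ℝ) T, (s+1)^(-(γ+2)/2) * (s+2)^((γ-1)/2)
      ≤ (T+2)^((1:ℝ)/2) * (((2:ℝ)^(γ/2) - 1)/(γ/2)) := by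
    have step1 : ∫ s in Ioc (0:ℝ) T, (s+1)^(-(γ+2)/2) * (s+2)^((γ-1)/2)
        ≤ ∫ s in Ioc (0:ℝ) T, (T+2)^((1:ℝ)/2) * ((s+1)^(-(γ/2)-1) * (s+2)^(γ/2-1)) := by
      apply setIntegral_mono_on (hf_int.mono_set Set.Ioc_subset_Ioi_self)
        ((hInt_h.mono_set Set.Ioc_subset_Ioi_self).const_mul _) measurableSet_Ioc
      intro s hs
      have hs0 : (0:ℝ) ≤ s := le_of_lt hs.1
      have h1 : (0:ℝ) < s + 1 := by linarith
      have h2 : (0:ℝ) < s + 2 := by linarith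
      rw [f_eq2 γ s hs0]
      apply mul_le_mul_of_nonneg_right _ (by positivity)
      exact Real.rpow_le_rpow h2.le (by linarith [hs.2]) (by norm_num)
    have step2 : ∫ s in Ioc (0:ℝ) T, (T+2)^((1:ℝ)/2) * ((s+1)^(-(γ/2)-1) * (s+2)^(γ/2-1))
        ≤ (T+2)^((1:ℝ)/2) * (((2:ℝ)^(γ/2) - 1)/(γ/2)) := by
      rw [MeasureTheory.integral_const_mul, ← hVal_h]
      apply mul_le_mul_of_nonneg_left _ (by positivity)
      apply setIntegral_mono_set hInt_h
      · filter_upwards [self_mem_ae_restrict measurableSet_Ioi] with s hs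
        have h1 : (0:ℝ) < s + 1 := by have := hs.out; linarith
        have h2 : (0:ℝ) < s + 2 := by have := hs.out; linarith
        positivity
      · exact HasSubset.Subset.eventuallyLE Set.Ioc_subset_Ioi_self
    exact step1.trans step2
  -- bound the second part
  have hpart2 : ∫ s in Ioi T, (s+1)^(-(γ+2)/2) * (s+2)^((γ-1)/2)
      ≤ ((T+2)/(T+1))^(γ/2) * 2 := by
    have step1 : ∫ s in Ioi T, (s+1)^(-(γ+2)/2) * (s+2)^((γ-1)/2)
        ≤ ∫ s in Ioi T, ((T+2)/(T+1))^(γ/2) * (s+1)^(-(3:ℝ)/2) := by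
      apply setIntegral_mono_on (hf_int.mono_set (Set.Ioi_subset_Ioi hT.le))
        (((tail_int T hT.le).1).const_mul _) measurableSet_Ioi
      intro s hs
      exact f_le γ T s (by linarith) hT.le (le_of_lt hs.out)
    have step2 : ∫ s in Ioi T, ((T+2)/(T+1))^(γ/2) * (s+1)^(-(3:ℝ)/2)
        ≤ ((T+2)/(T+1))^(γ/2) * 2 := by
      rw [MeasureTheory.integral_const_mul]
      exact mul_le_mul_of_nonneg_left (tail_int T hT.le).2 (by positivity)
    exact step1.trans step2
  -- combine
  have hI : ∫ s in Ioi (0:ℝ), (s+1)^(-(γ+2)/2) * (s+2)^((γ-1)/2)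
      ≤ (T+2)^((1:ℝ)/2) * (((2:ℝ)^(γ/2) - 1)/(γ/2)) + ((T+2)/(T+1))^(γ/2) * 2 := by
    rw [hsplit]; exact add_le_add hpart1 hpart2
  have hc : (0:ℝ) < (2:ℝ)^((1-γ)/2) * (γ/2) := by positivity
  calc (2:ℝ)^((1-γ)/2) * (γ/2) * ∫ s in Ioi (0:ℝ), (s+1)^(-(γ+2)/2) * (s+2)^((γ-1)/2)
      ≤ (2:ℝ)^((1-γ)/2) * (γ/2) *
          ((T+2)^((1:ℝ)/2) * (((2:ℝ)^(γ/2) - 1)/(γ/2)) + ((T+2)/(T+1))^(γ/2) * 2) :=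
        mul_le_mul_of_nonneg_left hI hc.le
    _ ≤ (T+2)^((1:ℝ)/2) * ((2:ℝ)^((1-γ)/2) * (2:ℝ)^(γ/2))
          + γ * (2:ℝ)^((1-γ)/2) * (((T+2)/(T+1)))^(γ/2) := by
        rw [mul_add]
        apply add_le_add
        · have e : (2:ℝ)^((1-γ)/2) * (γ/2) * ((T+2)^((1:ℝ)/2) * (((2:ℝ)^(γ/2) - 1)/(γ/2)))
              = (T+2)^((1:ℝ)/2) * ((2:ℝ)^((1-γ)/2) * ((2:ℝ)^(γ/2) - 1)) := by
            field_simp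
          rw [e]
          apply mul_le_mul_of_nonneg_left _ (by positivity)
          have : (0:ℝ) < (2:ℝ)^((1-γ)/2) := by positivity
          nlinarith
        · apply le_of_eq
          ring

private lemma aux_zero : Tendsto (fun γ : ℝ => (2:ℝ)^((1-γ)/2)) atTop (𝓝 0) := by
  have h1 : Tendsto (fun γ : ℝ => (1-γ)/2 * Real.log 2) atTop atBot := by
    apply Tendsto.atBot_mul_const (Real.log_pos one_lt_two)
    have h2 : Tendsto (fun γ : ℝ => -γ + 1) atTop atBot :=
      tendsto_atBot_add_const_right _ 1 tendsto_neg_atTop_atBot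
    have h3 := h2.atBot_mul_const (show (0:ℝ) < 1/2 by norm_num)
    exact Tendsto.congr (fun x => by ring) h3
  have h4 := Real.tendsto_exp_atBot.comp h1
  refine Tendsto.congr (fun γ => ?_) h4
  simp only [Function.comp]
  rw [Real.rpow_def_of_pos two_pos, mul_comm]

private lemma aux_A : Tendsto (fun γ : ℝ => (2:ℝ)^((1-γ)/2) * ((2:ℝ)^(γ/2) - 1))
    atTop (𝓝 ((2:ℝ)^((1:ℝ)/2))) := by
  have heq : ∀ γ : ℝ, (2:ℝ)^((1-γ)/2) * ((2:ℝ)^(γ/2) - 1)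
      = (2:ℝ)^((1:ℝ)/2) - (2:ℝ)^((1-γ)/2) := by
    intro γ
    rw [mul_sub, ← Real.rpow_add two_pos, mul_one,
      show (1-γ)/2 + γ/2 = (1:ℝ)/2 by ring]
  refine Tendsto.congr (fun γ => (heq γ).symm) ?_
  simpa using tendsto_const_nhds.sub aux_zero

private lemma aux_B (q : ℝ) (hq0 : 0 < q) (hq1 : q < 1) :
    Tendsto (fun γ : ℝ => γ * q^(γ/2)) atTop (𝓝 0) := by
  have hb : 0 < -(Real.log q) / 2 := by
    have := Real.log_neg hq0 hq1; linarith
  have h := tendsto_rpow_mul_exp_neg_mul_atTop_nhds_zero 1 _ hb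
  refine Tendsto.congr (fun x => ?_) h
  rw [Real.rpow_one, Real.rpow_def_of_pos hq0]
  congr 1
  congr 1
  ring

/-- `lim_{γ→∞} φ(γ) = 2`, where
`φ(γ) = 2^{(1-γ)/2}·(γ/2)·∫_0^∞ (s+1)^{-(γ+2)/2}(s+2)^{(γ-1)/2} ds`. -/
theorem phi_tendsto_two :
    Tendsto (fun γ : ℝ =>
      (2 : ℝ) ^ ((1 - γ) / 2) * (γ / 2) *
        ∫ s in Set.Ioi (0 : ℝ), (s + 1) ^ (-(γ + 2) / 2) * (s + 2) ^ ((γ - 1) / 2))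
      atTop (nhds 2) := by
  have hhalf : (2:ℝ)^((1:ℝ)/2) * (2:ℝ)^((1:ℝ)/2) = 2 := by
    rw [← Real.rpow_add two_pos]; norm_num
  rw [tendsto_order]
  constructor
  · intro b hb
    have hL : Tendsto (fun γ : ℝ => (2:ℝ)^((1-γ)/2) * ((2:ℝ)^((1:ℝ)/2) * ((2:ℝ)^(γ/2) - 1)))
        atTop (𝓝 2) := by
      have h := aux_A.const_mul ((2:ℝ)^((1:ℝ)/2))
      rw [hhalf] at h
      exact Tendsto.congr (fun γ => by ring) h
    filter_upwards [hL.eventually (eventually_gt_nhds hb), eventually_ge_atTop (1:ℝ)]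
      with γ h1 h2
    exact lt_of_lt_of_le h1 (phi_lower γ h2)
  · intro b hb
    set T : ℝ := b^2/4 - 1 with hTdef
    have hT : 0 < T := by rw [hTdef]; nlinarith
    have hT1 : (0:ℝ) < T + 1 := by linarith
    have hT2 : (0:ℝ) < T + 2 := by linarith
    set q : ℝ := (T+2)/(2*(T+1)) with hqdef
    have hq0 : 0 < q := by positivity
    have hq1 : q < 1 := by rw [hqdef, div_lt_one (by linarith)]; linarith
    have hU : Tendsto (fun γ : ℝ =>
        (T+2)^((1:ℝ)/2) * ((2:ℝ)^((1-γ)/2) * (2:ℝ)^(γ/2))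
          + γ * (2:ℝ)^((1-γ)/2) * ((T+2)/(T+1))^(γ/2))
        atTop (𝓝 ((T+2)^((1:ℝ)/2) * (2:ℝ)^((1:ℝ)/2))) := by
      have hbase : Tendsto (fun γ : ℝ =>
          (T+2)^((1:ℝ)/2) * (2:ℝ)^((1:ℝ)/2) + (2:ℝ)^((1:ℝ)/2) * (γ * q^(γ/2)))
          atTop (𝓝 ((T+2)^((1:ℝ)/2) * (2:ℝ)^((1:ℝ)/2))) := by
        have hc : Tendsto (fun _ : ℝ => (T+2)^((1:ℝ)/2) * (2:ℝ)^((1:ℝ)/2)) atTop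
            (𝓝 ((T+2)^((1:ℝ)/2) * (2:ℝ)^((1:ℝ)/2))) := tendsto_const_nhds
        have := hc.add (((aux_B q hq0 hq1).const_mul ((2:ℝ)^((1:ℝ)/2))))
        simpa using this
      refine Tendsto.congr (fun γ => ?_) hbase
      have e1 : (2:ℝ)^((1-γ)/2) * (2:ℝ)^(γ/2) = (2:ℝ)^((1:ℝ)/2) := by
        rw [← Real.rpow_add two_pos, show (1-γ)/2 + γ/2 = (1:ℝ)/2 by ring]
      have e2 : (2:ℝ)^((1-γ)/2) = (2:ℝ)^((1:ℝ)/2) * ((2:ℝ)^(γ/2))⁻¹ := by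
        rw [show (1-γ)/2 = (1:ℝ)/2 + -(γ/2) by ring, Real.rpow_add two_pos,
          Real.rpow_neg (by norm_num)]
      have e3 : q^(γ/2) = ((T+2)/(T+1))^(γ/2) / (2:ℝ)^(γ/2) := by
        rw [hqdef, show (T+2)/(2*(T+1)) = ((T+2)/(T+1))/2 by ring,
          Real.div_rpow (by positivity) (by norm_num)]
      rw [e1, e2, e3]
      ring
    have hlt : (T+2)^((1:ℝ)/2) * (2:ℝ)^((1:ℝ)/2) < b := by
      have hb0 : (0:ℝ) < b := by linarith
      have e4 : (T+2)^((1:ℝ)/2) * (2:ℝ)^((1:ℝ)/2) = ((T+2)*2)^((1:ℝ)/2) :=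
        (Real.mul_rpow (by positivity) (by norm_num)).symm
      have e5 : b = (b^2)^((1:ℝ)/2) := by
        rw [← Real.rpow_natCast b 2, ← Real.rpow_mul hb0.le]
        norm_num
      rw [e4]
      conv_rhs => rw [e5]
      apply Real.rpow_lt_rpow (by positivity) _ (by norm_num)
      rw [hTdef]
      push_cast
      nlinarith
    filter_upwards [hU.eventually (eventually_lt_nhds hlt), eventually_ge_atTop (1:ℝ)]
      with γ h1 h2
    exact lt_of_le_of_lt (phi_upper γ h2 T hT) h1
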